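/- In the setting of a mod-n reduction (ρ_* : T → T/n with right adjoint ρ^*, unit η, counit ε, and distinguished triangles X --(n·id)--> X --η_X--> ρ^*(ρ_* X) → X[1]), for every object Z of T/n one has n·id_{ρ^*Z} = 0 in T. -/

import Mathlib

open CategoryTheory CategoryTheory.Limits CategoryTheory.Pretriangulated

universe v₁ v₂ u₁ u₂

/-- In the setting of a mod-`n` reduction (an exact functor
`ρs : C ⥤ D` with exact right adjoint `ρu` and distinguished triangles
`X --(n·id)--> X --η_X--> ρu(ρs X) --> X⟦1⟧` for all `X`, where `η` is the adjunction
unit), one has `n • 𝟙 (ρu Z) = 0` for every object `Z` of `D`. -/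
theorem nsmul_id_rightAdjoint_obj_eq_zero
    {C : Type u₁} [Category.{v₁} C] [HasZeroObject C] [Preadditive C] [HasShift C ℤ]
    [∀ i : ℤ, (shiftFunctor C i).Additive] [Pretriangulated C]
    {D : Type u₂} [Category.{v₂} D] [HasZeroObject D] [Preadditive D] [HasShift D ℤ]
    [∀ i : ℤ, (shiftFunctor D i).Additive] [Pretriangulated D]
    (n : ℕ) (ρs : C ⥤ D) (ρu : D ⥤ C)
    [ρs.CommShift ℤ] [ρs.IsTriangulated] [ρu.CommShift ℤ] [ρu.IsTriangulated]
    (adj : ρs ⊣ ρu)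
    (hred : ∀ X : C, ∃ δ : ρu.obj (ρs.obj X) ⟶ X⟦(1 : ℤ)⟧,
      Triangle.mk (n • 𝟙 X) (adj.unit.app X) δ ∈ distTriang C) :
    ∀ Z : D, n • 𝟙 (ρu.obj Z) = 0 := by
  intro Z
  obtain ⟨δ, h⟩ := hred (ρu.obj Z)
  have h0 := comp_distTriang_mor_zero₁₂ _ h
  have h1 := adj.right_triangle_components Z
  calc n • 𝟙 (ρu.obj Z)
      = (n • 𝟙 (ρu.obj Z)) ≫ adj.unit.app (ρu.obj Z) ≫ ρu.map (adj.counit.app Z) := by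
        rw [h1, Category.comp_id]
    _ = 0 := by rw [← Category.assoc]; simp only [Triangle.mk] at h0; rw [h0]; exact zero_comp
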